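/- Let m, N ≥ 1, let A_i ∈ ℝ^{m×n_i} for i = 1, …, N, and let D ∈ ℝ^{m×m} be a diagonal matrix with nonnegative diagonal entries. Then the block matrix Q ∈ ℝ^{n×n} (n = Σ n_i) with diagonal blocks Q_{ii} = 2 A_iᵀ D A_i and off-diagonal blocks Q_{ij} = A_iᵀ D A_j (i ≠ j) is positive semidefinite; indeed Q = diag{A_1ᵀ D A_1, …, A_Nᵀ D A_N} + Sᵀ S where S = [√D A_1, …, √D A_N] and √D is the entrywise square root of D. -/

import Mathlib

open scoped Matrix

noncomputable section

/-- The block matrix `Q` with diagonal blocks `2 A_iᵀ D A_i` and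
off-diagonal blocks `A_iᵀ D A_j` decomposes as
`Q = diag{A_1ᵀ D A_1, …, A_Nᵀ D A_N} + Sᵀ S` with `S = [√D A_1, …, √D A_N]`, and in
particular `Q` is positive semidefinite. -/
theorem cournot_pseudogradient_matrix_posSemidef
    (m N : ℕ) (hm : 1 ≤ m) (hN : 1 ≤ N) (n : Fin N → ℕ)
    (A : ∀ i : Fin N, Matrix (Fin m) (Fin (n i)) ℝ)
    (D : Fin m → ℝ) (hD : ∀ k, 0 ≤ D k)
    (Q : Matrix (Σ i : Fin N, Fin (n i)) (Σ i : Fin N, Fin (n i)) ℝ)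
    (hQ : ∀ p q : Σ i : Fin N, Fin (n i),
      Q p q = (if p.1 = q.1 then 2 else 1) *
        ((A p.1)ᵀ * Matrix.diagonal D * A q.1) p.2 q.2)
    (S : Matrix (Fin m) (Σ i : Fin N, Fin (n i)) ℝ)
    (hS : ∀ (k : Fin m) (p : Σ i : Fin N, Fin (n i)),
      S k p = Real.sqrt (D k) * A p.1 k p.2) :
    Q = Matrix.of (fun p q : Σ i : Fin N, Fin (n i) =>
        if p.1 = q.1 then ((A p.1)ᵀ * Matrix.diagonal D * A q.1) p.2 q.2 else 0) +
        Sᵀ * S ∧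
      Q.PosSemidef := by
  have entry : ∀ p q : Σ i : Fin N, Fin (n i),
      ((A p.1)ᵀ * Matrix.diagonal D * A q.1) p.2 q.2
        = ∑ k : Fin m, D k * (A p.1 k p.2 * A q.1 k q.2) := by
    intro p q
    rw [Matrix.mul_assoc, Matrix.mul_apply]
    refine Finset.sum_congr rfl fun k _ => ?_
    rw [Matrix.diagonal_mul, Matrix.transpose_apply]
    ring
  have hSS : ∀ p q : Σ i : Fin N, Fin (n i),
      (Sᵀ * S) p q = ((A p.1)ᵀ * Matrix.diagonal D * A q.1) p.2 q.2 := by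
    intro p q
    rw [Matrix.mul_apply, entry]
    refine Finset.sum_congr rfl fun k _ => ?_
    rw [Matrix.transpose_apply, hS, hS]
    rw [mul_mul_mul_comm, Real.mul_self_sqrt (hD k)]
  have hdecomp : Q = Matrix.of (fun p q : Σ i : Fin N, Fin (n i) =>
        if p.1 = q.1 then ((A p.1)ᵀ * Matrix.diagonal D * A q.1) p.2 q.2 else 0) +
        Sᵀ * S := by
    ext p q
    rw [hQ, Matrix.add_apply, Matrix.of_apply, hSS]
    by_cases h : p.1 = q.1 <;> simp [h] <;> ring
  refine ⟨hdecomp, ?_⟩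
  rw [hdecomp]
  set T : Matrix (Fin N × Fin m) (Σ i : Fin N, Fin (n i)) ℝ :=
    fun ik p => if ik.1 = p.1 then Real.sqrt (D ik.2) * A p.1 ik.2 p.2 else 0 with hT
  have hM : Matrix.of (fun p q : Σ i : Fin N, Fin (n i) =>
        if p.1 = q.1 then ((A p.1)ᵀ * Matrix.diagonal D * A q.1) p.2 q.2 else 0) = Tᵀ * T := by
    ext p q
    rw [Matrix.mul_apply, Matrix.of_apply]
    rw [Fintype.sum_prod_type]
    by_cases h : p.1 = q.1
    · simp only [h, if_pos]
      rw [entry]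
      rw [Finset.sum_comm]
      refine Finset.sum_congr rfl fun k _ => ?_
      have : ∀ i : Fin N, (Tᵀ) p (i, k) * T (i, k) q
          = if i = q.1 then D k * (A p.1 k p.2 * A q.1 k q.2) else 0 := by
        intro i
        rw [Matrix.transpose_apply]; simp only [hT, ← h]
        by_cases hi : i = p.1
        · subst hi
          simp [h]
          rw [mul_mul_mul_comm, Real.mul_self_sqrt (hD k)]
        · simp [hi, h ▸ hi]
      simp only [this]
      simp
    · rw [if_neg h]
      symm
      refine Finset.sum_eq_zero fun i _ => Finset.sum_eq_zero fun k _ => ?_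
      rw [Matrix.transpose_apply]; simp only [hT]
      by_cases hi : i = p.1
      · have hq : ¬ i = q.1 := fun hq => h (hi ▸ hq)
        simp [hq]
      · simp [hi]
  rw [hM]
  exact (Matrix.posSemidef_conjTranspose_mul_self T).add
    (Matrix.posSemidef_conjTranspose_mul_self S)

end
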